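/- arXiv:2410.12283 — 6 statements merged into one kernel-verified Lean document; each statement's English description precedes it below -/
import Mathlib

section
/- Let n ≥ 1, let g : ℝⁿ → ℝ be three times continuously differentiable with ∇g(x) ≠ 0 for every x with g(x) = 0. Then for every continuous compactly supported function f : ℝⁿ → ℝ and every ε > 0 there exists a twice continuously differentiable, compactly supported function φ : ℝⁿ → ℝ such that ⟨∇φ(x), ∇g(x)⟩ = 0 for every x with g(x) = 0, and sup_{x ∈ ℝⁿ} |φ(x) − f(x)| < ε. (In other words, the C²-compactly-supported functions whose gradient is tangent along the zero level set of g are dense in the continuous compactly supported functions with respect to the supremum norm.) -/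
open MeasureTheory Filter Topology
open scoped Convolution

section Aux

open InnerProductSpace

variable {F : Type*} [NormedAddCommGroup F] [InnerProductSpace ℝ F] [CompleteSpace F]

lemma aux_inner_gradient (f : F → ℝ) (x v : F) :
    (inner ℝ (gradient f x) v : ℝ) = fderiv ℝ f x v := by
  rw [gradient, ← InnerProductSpace.toDual_apply_apply, LinearIsometryEquiv.apply_symm_apply]

lemma aux_contDiff_gradient (f : F → ℝ) (hf : ContDiff ℝ 3 f) :
    ContDiff ℝ 2 (gradient f) := by
  have h1 : ContDiff ℝ 2 (fderiv ℝ f) := hf.fderiv_right (by norm_num)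
  exact (toDual ℝ F).symm.contDiff.comp h1

lemma aux_gradient_eq_zero {f : F → ℝ} {x : F} (h : fderiv ℝ f x = 0) :
    gradient f x = 0 := by
  rw [gradient, h, map_zero]

end Aux

/-- Smooth compactly supported approximation of a continuous compactly supported function. -/
lemma aux_exists_smooth_approx (n : ℕ) (f : EuclideanSpace ℝ (Fin n) → ℝ)
    (hf : Continuous f) (hfc : HasCompactSupport f) {ε : ℝ} (hε : 0 < ε) :
    ∃ ψ : EuclideanSpace ℝ (Fin n) → ℝ, ContDiff ℝ 3 ψ ∧ HasCompactSupport ψ ∧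
      ∀ x, |ψ x - f x| ≤ ε := by
  obtain ⟨δ, hδ, hδ'⟩ := Metric.uniformContinuous_iff.mp
    (hfc.uniformContinuous_of_continuous hf) ε hε
  set Φ : ContDiffBump (0 : EuclideanSpace ℝ (Fin n)) :=
    { rIn := δ / 2, rOut := 3 * δ / 4, rIn_pos := by positivity,
      rIn_lt_rOut := by linarith } with hΦ
  refine ⟨Φ.normed volume ⋆[ContinuousLinearMap.lsmul ℝ ℝ, volume] f, ?_, ?_, ?_⟩
  · exact HasCompactSupport.contDiff_convolution_left (μ := volume) _ Φ.hasCompactSupport_normed (Φ.contDiff_normed (n := 3))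
      ((hf.integrable_of_hasCompactSupport hfc).locallyIntegrable)
  · exact HasCompactSupport.convolution (μ := volume) (L := ContinuousLinearMap.lsmul ℝ ℝ) Φ.hasCompactSupport_normed hfc
  · intro x
    have hb : ∀ y ∈ Metric.ball x Φ.rOut, dist (f y) (f x) ≤ ε := by
      intro y hy
      refine (hδ' ?_).le
      have : dist y x < 3 * δ / 4 := by simpa [hΦ] using hy
      linarith
    have := Φ.dist_normed_convolution_le (μ := volume) hf.aestronglyMeasurable hb
    rwa [Real.dist_eq] at this

/-- The C²-compactly-supported functions whose gradient is tangent along the zero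
level set of `g` are dense in the continuous compactly supported functions with
respect to the supremum norm. -/
theorem stmt_0 (n : ℕ) (hn : 1 ≤ n) (g : EuclideanSpace ℝ (Fin n) → ℝ)
    (hg : ContDiff ℝ 3 g)
    (hg' : ∀ x, g x = 0 → gradient g x ≠ 0)
    (f : EuclideanSpace ℝ (Fin n) → ℝ) (hf : Continuous f) (hfc : HasCompactSupport f)
    (ε : ℝ) (hε : 0 < ε) :
    ∃ φ : EuclideanSpace ℝ (Fin n) → ℝ, ContDiff ℝ 2 φ ∧ HasCompactSupport φ ∧
      (∀ x, g x = 0 → (inner ℝ (gradient φ x) (gradient g x) : ℝ) = 0) ∧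
      ∀ x, |φ x - f x| < ε := by
  classical
  -- Step 1: smooth approximation ψ of f
  obtain ⟨ψ, hψ3, hψc, hψf⟩ := aux_exists_smooth_approx n f hf hfc (by positivity : (0:ℝ) < ε/4)
  -- Step 2: the cutoff χ
  set S : Set (EuclideanSpace ℝ (Fin n)) := {x | gradient g x ≠ 0} with hS
  have hSopen : IsOpen S := by
    have : Continuous (gradient g) := (aux_contDiff_gradient g hg).continuous
    exact isOpen_compl_iff.mpr (isClosed_singleton.preimage this)
  set Z : Set (EuclideanSpace ℝ (Fin n)) := g ⁻¹' {0} with hZ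
  have hZclosed : IsClosed Z := isClosed_singleton.preimage hg.continuous
  have hZS : Z ⊆ S := fun x hx => hg' x hx
  have hdisj : Disjoint Sᶜ Z := Set.disjoint_left.mpr fun x hxS hxZ => hxS (hZS hxZ)
  obtain ⟨χ, hχ0, hχ1, hχ01⟩ :=
    exists_contMDiffMap_zero_one_nhds_of_isClosed ((modelWithCornersSelf ℝ (EuclideanSpace ℝ (Fin n)))) (n := (⊤:ℕ∞)) hSopen.isClosed_compl hZclosed hdisj
  have hχsm : ContDiff ℝ 2 (χ : EuclideanSpace ℝ (Fin n) → ℝ) :=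
    (contMDiff_iff_contDiff.mp χ.contMDiff).of_le (by norm_cast : (2 : WithTop ℕ∞) ≤ ((⊤:ℕ∞) : WithTop ℕ∞))
  -- Step 3: the correction factor w
  set N : EuclideanSpace ℝ (Fin n) → ℝ := fun x => (inner ℝ (gradient ψ x) (gradient g x) : ℝ) with hN
  set D : EuclideanSpace ℝ (Fin n) → ℝ := fun x => (inner ℝ (gradient g x) (gradient g x) : ℝ) with hD
  have hNc : ContDiff ℝ 2 N :=
    (aux_contDiff_gradient ψ hψ3).inner ℝ (aux_contDiff_gradient g hg)
  have hDc : ContDiff ℝ 2 D :=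
    (aux_contDiff_gradient g hg).inner ℝ (aux_contDiff_gradient g hg)
  set w : EuclideanSpace ℝ (Fin n) → ℝ := fun x => χ x * (N x / D x) with hw
  have hwc2 : ContDiff ℝ 2 w := by
    rw [contDiff_iff_contDiffAt]
    intro x
    by_cases hx : x ∈ S
    · have hDx : D x ≠ 0 := inner_self_ne_zero.mpr hx
      exact hχsm.contDiffAt.mul (hNc.contDiffAt.div hDc.contDiffAt hDx)
    · have hev : ∀ᶠ y in 𝓝 x, (χ : EuclideanSpace ℝ (Fin n) → ℝ) y = 0 := hχ0.filter_mono (nhds_le_nhdsSet (show x ∈ Sᶜ from hx))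
      have hev' : w =ᶠ[𝓝 x] fun _ => (0:ℝ) := hev.mono fun y hy => by simp [hw, hy]
      exact (contDiffAt_const (c := (0:ℝ))).congr_of_eventuallyEq hev'
  have hw_supp : HasCompactSupport w := by
    refine HasCompactSupport.intro hψc fun x hx => ?_
    have hfd : fderiv ℝ ψ x = 0 := by
      by_contra h
      exact hx (support_fderiv_subset (𝕜 := ℝ) (f := ψ) h)
    have : gradient ψ x = 0 := aux_gradient_eq_zero hfd
    simp [hw, hN, this]
  obtain ⟨M, hM⟩ := hwc2.continuous.bounded_above_of_compact_support hw_supp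
  have hM0 : 0 ≤ M := le_trans (norm_nonneg _) (hM 0)
  -- Step 4: the flattening function θ
  set δ₀ : ℝ := ε / (4 * (M + 1)) with hδ₀
  have hδ₀pos : 0 < δ₀ := by positivity
  set θ : ℝ → ℝ := fun t => δ₀ * Real.arctan (t / δ₀) with hθ
  have hθ0 : θ 0 = 0 := by simp [hθ]
  have hθc : ContDiff ℝ 2 θ :=
    contDiff_const.mul (Real.contDiff_arctan.comp (contDiff_id.div_const δ₀))
  have hθd : HasDerivAt θ 1 0 := by
    have h1 : HasDerivAt (fun t : ℝ => t / δ₀) (1 / δ₀) 0 := (hasDerivAt_id 0).div_const δ₀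
    have h2 := (Real.hasDerivAt_arctan ((0:ℝ) / δ₀)).comp 0 h1
    have h3 := h2.const_mul δ₀
    have : δ₀ * (1 / (1 + ((0:ℝ) / δ₀) ^ 2) * (1 / δ₀)) = 1 := by
      field_simp
      ring
    rw [this] at h3
    exact h3
  have hθb : ∀ t, |θ t| ≤ δ₀ * 2 := by
    intro t
    have h1 : |Real.arctan (t / δ₀)| ≤ 2 := by
      rw [abs_le]
      constructor
      · nlinarith [Real.neg_pi_div_two_lt_arctan (t / δ₀), Real.pi_lt_d2]
      · nlinarith [Real.arctan_lt_pi_div_two (t / δ₀), Real.pi_lt_d2]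
    calc |θ t| = δ₀ * |Real.arctan (t / δ₀)| := by
          rw [hθ]; rw [abs_mul, abs_of_pos hδ₀pos]
      _ ≤ δ₀ * 2 := by nlinarith
  -- Step 5: define φ
  set φ : EuclideanSpace ℝ (Fin n) → ℝ := fun x => ψ x - θ (g x) * w x with hφ
  refine ⟨φ, ?_, ?_, ?_, ?_⟩
  · exact (hψ3.of_le (by norm_num)).sub ((hθc.comp (hg.of_le (by norm_num))).mul hwc2)
  · have h1 : HasCompactSupport (fun x => θ (g x) * w x) := by
      refine HasCompactSupport.intro hw_supp fun x hx => ?_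
      have : w x = 0 := by
        by_contra h
        exact hx (subset_tsupport w h)
      simp [this]
    refine HasCompactSupport.intro (hψc.isCompact.union h1.isCompact) fun x hx => ?_
    have hx1 : ψ x = 0 := image_eq_zero_of_notMem_tsupport fun h => hx (Set.mem_union_left _ h)
    have hx2 : (fun x => θ (g x) * w x) x = 0 :=
      image_eq_zero_of_notMem_tsupport (f := fun x => θ (g x) * w x)
        fun h => hx (Set.mem_union_right _ h)
    simp only at hx2
    simp [hφ, hx1, hx2]
  · -- tangency
    intro x hx
    have hGne : gradient g x ≠ 0 := hg' x hx
    have hgd : HasFDerivAt g (fderiv ℝ g x) x :=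
      ((hg.differentiable (by norm_num)) x).hasFDerivAt
    have hψd : HasFDerivAt ψ (fderiv ℝ ψ x) x :=
      ((hψ3.differentiable (by norm_num)) x).hasFDerivAt
    have hθgd : HasFDerivAt (fun y => θ (g y)) ((1:ℝ) • fderiv ℝ g x) x :=
      hθd.comp_hasFDerivAt_of_eq x hgd hx.symm
    have hwd : HasFDerivAt w (fderiv ℝ w x) x :=
      ((hwc2.differentiable (by norm_num)) x).hasFDerivAt
    have hmul := hθgd.mul hwd
    have hφd := hψd.sub hmul
    have hφg : HasGradientAt φ ((InnerProductSpace.toDual ℝ (EuclideanSpace ℝ (Fin n))).symm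
        (fderiv ℝ ψ x - (θ (g x) • fderiv ℝ w x + w x • ((1:ℝ) • fderiv ℝ g x)))) x :=
      hasFDerivAt_iff_hasGradientAt.mp hφd
    rw [hφg.gradient, ← InnerProductSpace.toDual_apply_apply, LinearIsometryEquiv.apply_symm_apply]
    have hχx : (χ : EuclideanSpace ℝ (Fin n) → ℝ) x = 1 := hχ1.self_of_nhdsSet x hx
    have hDx : D x ≠ 0 := inner_self_ne_zero.mpr hGne
    have hwx : w x = N x / D x := by rw [hw]; simp [hχx]
    have e1 : fderiv ℝ ψ x (gradient g x) = N x := (aux_inner_gradient ψ x (gradient g x)).symm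
    have e2 : fderiv ℝ g x (gradient g x) = D x := (aux_inner_gradient g x (gradient g x)).symm
    simp only [ContinuousLinearMap.sub_apply, ContinuousLinearMap.add_apply,
      ContinuousLinearMap.smul_apply, one_smul, hx, hθ0, zero_smul, zero_add,
      smul_eq_mul, e1, e2, hwx]
    field_simp
    ring
  · -- sup bound
    intro x
    have h1 : |ψ x - f x| ≤ ε / 4 := hψf x
    have h2 : |θ (g x) * w x| ≤ δ₀ * 2 * M := by
      rw [abs_mul]
      have := hθb (g x)
      have := hM x
      have hwn : |w x| ≤ M := by simpa [Real.norm_eq_abs] using hM x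
      have h0 : (0:ℝ) ≤ |θ (g x)| := abs_nonneg _
      nlinarith [abs_nonneg (w x)]
    have h3 : δ₀ * 2 * M ≤ ε / 2 := by
      rw [hδ₀]
      rw [div_mul_eq_mul_div, div_mul_eq_mul_div, div_le_iff₀ (by positivity)]
      nlinarith
    have : |φ x - f x| ≤ |ψ x - f x| + |θ (g x) * w x| := by
      rw [hφ]
      have : ψ x - θ (g x) * w x - f x = (ψ x - f x) + (-(θ (g x) * w x)) := by ring
      rw [this]
      simpa using abs_add_le (ψ x - f x) (-(θ (g x) * w x))
    linarith
end

section
/- Let n ≥ 1, let (μ_t)_{t ≥ 0} be a family of Radon measures on ℝⁿ, let H : [0,∞) × ℝⁿ → ℝⁿ be measurable, and let φ : ℝⁿ → ℝ be a nonnegative, twice continuously differentiable, compactly supported function. Assume: (i) there is C₀ ≥ 0 with μ_t(supp φ) ≤ C₀ for all t ≥ 0; (ii) for every 0 ≤ t₁ < t₂ the map t ↦ ∫ (⟨∇φ(x), H(t,x)⟩ − φ(x)‖H(t,x)‖²) dμ_t(x) is integrable on [t₁,t₂] and ∫φ dμ_{t₂} − ∫φ dμ_{t₁} ≤ ∫_{t₁}^{t₂}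 ∫ (⟨∇φ(x), H(t,x)⟩ − φ(x)‖H(t,x)‖²) dμ_t(x) dt. Then, with C₁ := C₀ · sup_y ‖∇²φ(y)‖, the function t ↦ ∫φ dμ_t − C₁·t is nonincreasing on [0,∞). -/
open MeasureTheory

private lemma nonneg_of_deriv_nonneg {F F' : ℝ → ℝ} (hF : ∀ t, HasDerivAt F (F' t) t)
    (h0 : F 0 = 0) (hF' : ∀ t, 0 ≤ t → 0 ≤ F' t) {t : ℝ} (ht : 0 ≤ t) : 0 ≤ F t := by
  have hmono : MonotoneOn F (Set.Ici (0:ℝ)) := by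
    refine monotoneOn_of_deriv_nonneg (convex_Ici 0)
      (Continuous.continuousOn ?_) (fun s _ => (hF s).differentiableAt.differentiableWithinAt)
      (fun s hs => ?_)
    · exact continuous_iff_continuousAt.2 fun s => (hF s).continuousAt
    · rw [(hF s).deriv]
      exact hF' s (le_of_lt (by simpa using hs))
  have := hmono (Set.self_mem_Ici) ht ht
  linarith [h0 ▸ this]

private lemma taylor_two_bound {f f' f'' : ℝ → ℝ} {M : ℝ}
    (hf : ∀ t, HasDerivAt f (f' t) t) (hf' : ∀ t, HasDerivAt f' (f'' t) t)
    (hM : ∀ t, |f'' t| ≤ M) (hpos : ∀ t, 0 ≤ f t) {t : ℝ} (ht : 0 ≤ t) :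
    0 ≤ f 0 + f' 0 * t + M * t ^ 2 / 2 := by
  have step1 : ∀ s : ℝ, 0 ≤ s → f' s - f' 0 ≤ M * s := by
    intro s hs
    have h := nonneg_of_deriv_nonneg (F := fun s => M * s - (f' s - f' 0))
      (F' := fun s => M - f'' s) ?_ (by ring)
      (fun s _ => by
        show 0 ≤ M - f'' s
        have := (abs_le.1 (hM s)).2; linarith) hs
    · linarith
    · intro s
      have h2 : HasDerivAt (fun s : ℝ => M * s - (f' s - f' 0)) (M * 1 - f'' s) s :=
        ((hasDerivAt_id s).const_mul M).sub ((hf' s).sub_const (f' 0))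
      show HasDerivAt _ (M - f'' s) s
      simpa using h2
  have step2 := nonneg_of_deriv_nonneg (F := fun s => f 0 + f' 0 * s + M * s ^ 2 / 2 - f s)
    (F' := fun s => f' 0 + M * s - f' s) ?_ (by ring)
    (fun s hs => by
      show 0 ≤ f' 0 + M * s - f' s
      linarith [step1 s hs]) ht
  · linarith [hpos t]
  · intro s
    show HasDerivAt _ (f' 0 + M * s - f' s) s
    have h3 : HasDerivAt (fun s : ℝ => f 0 + f' 0 * s + M * s ^ 2 / 2 - f s)
        ((0 + f' 0 * 1 + M * (↑2 * s ^ 1) / 2) - f' s) s :=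
      (((hasDerivAt_const s (f 0)).add ((hasDerivAt_id s).const_mul (f' 0))).add
        (((hasDerivAt_pow 2 s).const_mul M).div_const 2)).sub (hf s)
    convert h3 using 1
    ring

private lemma quad_sq_le {f0 a M : ℝ} (hf0 : 0 ≤ f0) (hM : 0 ≤ M)
    (h : ∀ t : ℝ, 0 ≤ t → 0 ≤ f0 - |a| * t + M * t ^ 2 / 2) : a ^ 2 ≤ 2 * M * f0 := by
  rcases eq_or_lt_of_le hM with h0 | h0
  · have ha : a = 0 := by
      by_contra hne
      have habs : 0 < |a| := abs_pos.2 hne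
      have := h ((f0 + 1) / |a|) (by positivity)
      rw [← h0] at this
      field_simp at this
      nlinarith [pow_pos habs 2]
    rw [ha]
    nlinarith
  · have key := h (|a| / M) (by positivity)
    have e1 : |a| * (|a| / M) = |a| ^ 2 / M := by ring
    have e2 : M * (|a| / M) ^ 2 / 2 = |a| ^ 2 / (2 * M) := by
      field_simp
    rw [e1, e2] at key
    have e3 : |a| ^ 2 / M = |a| ^ 2 / (2 * M) + |a| ^ 2 / (2 * M) := by
      field_simp; ring
    have key2 : |a| ^ 2 / (2 * M) ≤ f0 := by rw [e3] at key; linarith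
    have := (div_le_iff₀ (by positivity : (0:ℝ) < 2 * M)).1 key2
    rw [sq_abs] at this
    linarith

section
variable {n : ℕ}
local notation "E" => EuclideanSpace ℝ (Fin n)

private lemma dir_sq_le {φ : E → ℝ} (hφ : ContDiff ℝ 2 φ) (hφ0 : ∀ x, 0 ≤ φ x)
    {M : ℝ} (hM : ∀ y, ‖iteratedFDeriv ℝ 2 φ y‖ ≤ M)
    (x : E) {u : E} (hu : ‖u‖ = 1) :
    (fderiv ℝ φ x u) ^ 2 ≤ 2 * M * φ x := by
  have hM0 : 0 ≤ M := le_trans (norm_nonneg _) (hM x)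
  have hφd : Differentiable ℝ φ := hφ.differentiable (by norm_num)
  have hφ'd : Differentiable ℝ (fderiv ℝ φ) :=
    (hφ.fderiv_right (m := 1) (by norm_num)).differentiable (by norm_num)
  -- for any unit vector v, Taylor bound along v
  have key : ∀ v : E, ‖v‖ = 1 → ∀ t : ℝ, 0 ≤ t →
      0 ≤ φ x + (fderiv ℝ φ x v) * t + M * t ^ 2 / 2 := by
    intro v hv t ht
    set l : ℝ → E := fun s => x + s • v with hl
    have hld : ∀ s : ℝ, HasDerivAt l v s := by
      intro s
      exact (by simpa using ((hasDerivAt_id s).smul_const v) : HasDerivAt (fun y : ℝ => y • v) v s).const_add x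
    have hg : ∀ s : ℝ, HasDerivAt (fun s => φ (l s)) (fderiv ℝ φ (l s) v) s :=
      fun s => (hφd (l s)).hasFDerivAt.comp_hasDerivAt s (hld s)
    have hg' : ∀ s : ℝ, HasDerivAt (fun s => fderiv ℝ φ (l s) v)
        (fderiv ℝ (fderiv ℝ φ) (l s) v v) s := by
      intro s
      have hc : HasDerivAt (fun s => fderiv ℝ φ (l s)) (fderiv ℝ (fderiv ℝ φ) (l s) v) s :=
        (hφ'd (l s)).hasFDerivAt.comp_hasDerivAt s (hld s)
      simpa using hc.clm_apply (hasDerivAt_const s v)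
    have hbd : ∀ s : ℝ, |fderiv ℝ (fderiv ℝ φ) (l s) v v| ≤ M := by
      intro s
      have h1 : fderiv ℝ (fderiv ℝ φ) (l s) v v = iteratedFDeriv ℝ 2 φ (l s) ![v, v] := by
        rw [iteratedFDeriv_two_apply]
        simp
      rw [h1, ← Real.norm_eq_abs]
      calc ‖iteratedFDeriv ℝ 2 φ (l s) ![v, v]‖
          ≤ ‖iteratedFDeriv ℝ 2 φ (l s)‖ * ∏ i : Fin 2, ‖(![v, v] : Fin 2 → E) i‖ :=
            (iteratedFDeriv ℝ 2 φ (l s)).le_opNorm _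
        _ ≤ M := by
            simp [Fin.prod_univ_two, hv]
            exact hM (l s)
    have := taylor_two_bound hg hg' hbd (fun s => hφ0 (l s)) ht
    simpa [hl] using this
  -- apply quad_sq_le
  refine quad_sq_le (hφ0 x) hM0 (fun t ht => ?_)
  rcases le_total 0 (fderiv ℝ φ x u) with hb | hb
  · have := key (-u) (by simpa using hu) t ht
    have he : fderiv ℝ φ x (-u) = -(fderiv ℝ φ x u) := by simp
    rw [he] at this
    rw [abs_of_nonneg hb]
    linarith
  · have := key u hu t ht
    rw [abs_of_nonpos hb]
    linarith

private lemma pointwise_bound {φ : E → ℝ} (hφ : ContDiff ℝ 2 φ) (hφ0 : ∀ x, 0 ≤ φ x)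
    {M : ℝ} (hM : ∀ y, ‖iteratedFDeriv ℝ 2 φ y‖ ≤ M)
    (x h : E) :
    (inner ℝ (gradient φ x) h : ℝ) - φ x * ‖h‖ ^ 2 ≤ M / 2 := by
  have hM0 : 0 ≤ M := le_trans (norm_nonneg _) (hM x)
  have hgrad : (inner ℝ (gradient φ x) h : ℝ) = fderiv ℝ φ x h := by
    simp [gradient, ← InnerProductSpace.toDual_apply_apply]
  rcases eq_or_ne h 0 with rfl | hne
  · simp [hgrad]
    positivity
  · set u : E := ‖h‖⁻¹ • h with hu
    have hu1 : ‖u‖ = 1 := by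
      rw [hu, norm_smul]
      simp [norm_ne_zero_iff.2 hne]
    have hsq := dir_sq_le hφ hφ0 hM x hu1
    have hh : h = ‖h‖ • u := by
      rw [hu, smul_smul, mul_inv_cancel₀ (norm_ne_zero_iff.2 hne), one_smul]
    have hfh : fderiv ℝ φ x h = ‖h‖ * fderiv ℝ φ x u := by
      conv_lhs => rw [hh]
      simp
    rw [hgrad, hfh]
    set b := fderiv ℝ φ x u
    set s := ‖h‖
    have hs0 : 0 ≤ s := norm_nonneg _
    have hp0 : 0 ≤ φ x := hφ0 x
    rcases eq_or_lt_of_le hp0 with hp | hp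
    · have hb0 : b = 0 := by nlinarith [hsq, sq_nonneg b]
      rw [hb0, ← hp]
      nlinarith
    · nlinarith [sq_nonneg (2 * φ x * s - |b|), sq_abs b, hsq, hp, hs0,
        mul_le_mul_of_nonneg_left (le_abs_self b) (mul_nonneg (le_of_lt hp) hs0)]

end
section
variable {n : ℕ}
local notation "E" => EuclideanSpace ℝ (Fin n)

private lemma integral_bound {φ : E → ℝ} (hφ : ContDiff ℝ 2 φ) (hφ0 : ∀ x, 0 ≤ φ x)
    {M : ℝ} (hM : ∀ y, ‖iteratedFDeriv ℝ 2 φ y‖ ≤ M)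
    {C₀ : ℝ} (hC₀ : 0 ≤ C₀) (μ : Measure E) (hμ : μ (tsupport φ) ≤ ENNReal.ofReal C₀)
    (G : E → E) :
    ∫ x, ((inner ℝ (gradient φ x) (G x) : ℝ) - φ x * ‖G x‖ ^ 2) ∂ μ ≤ C₀ * M := by
  have hM0 : 0 ≤ M := le_trans (norm_nonneg _) (hM 0)
  set f : E → ℝ := fun x => (inner ℝ (gradient φ x) (G x) : ℝ) - φ x * ‖G x‖ ^ 2 with hf
  set ind : E → ℝ := (tsupport φ).indicator (fun _ => M / 2) with hind
  have hzero : ∀ x, x ∉ tsupport φ → f x = 0 := by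
    intro x hx
    have hev : φ =ᶠ[nhds x] fun _ => 0 :=
      Filter.eventually_of_mem ((isClosed_tsupport φ).isOpen_compl.mem_nhds hx)
        (fun y hy => image_eq_zero_of_notMem_tsupport hy)
    have hfd : fderiv ℝ φ x = 0 := by
      rw [hev.fderiv_eq]
      exact fderiv_const_apply 0
    have hg0 : gradient φ x = 0 := by
      simp [gradient, hfd]
    simp [hf, hg0, hfd, image_eq_zero_of_notMem_tsupport hx]
  have hle : ∀ x, f x ≤ ind x := by
    intro x
    by_cases hx : x ∈ tsupport φ
    · rw [hind, Set.indicator_of_mem hx]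
      exact pointwise_bound hφ hφ0 hM x (G x)
    · rw [hzero x hx, hind, Set.indicator_of_notMem hx]
  have hindint : Integrable ind μ := by
    rw [hind]
    refine (integrable_indicator_iff (isClosed_tsupport φ).measurableSet).2 ?_
    exact integrableOn_const (lt_of_le_of_lt hμ ENNReal.ofReal_lt_top).ne
  by_cases hint : Integrable f μ
  · calc ∫ x, f x ∂ μ ≤ ∫ x, ind x ∂ μ := integral_mono hint hindint hle
      _ = (μ (tsupport φ)).toReal • (M / 2) :=
          integral_indicator_const (M / 2) (isClosed_tsupport φ).measurableSet
      _ ≤ C₀ * M := by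
          have hr : (μ (tsupport φ)).toReal ≤ C₀ := ENNReal.toReal_le_of_le_ofReal hC₀ hμ
          have hr0 : 0 ≤ (μ (tsupport φ)).toReal := ENNReal.toReal_nonneg
          rw [smul_eq_mul]
          nlinarith
  · rw [integral_undef hint]
    positivity

end

open MeasureTheory Filter Topology

/-- Semi-decreasing property of the mass of a Brakke flow (Lemma 4.1 (1)). -/
theorem stmt_2 (n : ℕ) (hn : 1 ≤ n)
    (μ : ℝ → Measure (EuclideanSpace ℝ (Fin n)))
    (hrad : ∀ t, IsLocallyFiniteMeasure (μ t))
    (H : ℝ → EuclideanSpace ℝ (Fin n) → EuclideanSpace ℝ (Fin n))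
    (hH : Measurable (Function.uncurry H))
    (φ : EuclideanSpace ℝ (Fin n) → ℝ)
    (hφ : ContDiff ℝ 2 φ) (hφc : HasCompactSupport φ) (hφ0 : ∀ x, 0 ≤ φ x)
    (C₀ : ℝ) (hC₀ : 0 ≤ C₀)
    (hmass : ∀ t, 0 ≤ t → μ t (tsupport φ) ≤ ENNReal.ofReal C₀)
    (hBrakke : ∀ t₁ t₂, 0 ≤ t₁ → t₁ < t₂ →
      IntervalIntegrable
        (fun t => ∫ x, ((inner ℝ (gradient φ x) (H t x) : ℝ) - φ x * ‖H t x‖ ^ 2) ∂ μ t)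
        volume t₁ t₂ ∧
      (∫ x, φ x ∂ μ t₂) - (∫ x, φ x ∂ μ t₁) ≤
        ∫ t in t₁..t₂,
          ∫ x, ((inner ℝ (gradient φ x) (H t x) : ℝ) - φ x * ‖H t x‖ ^ 2) ∂ μ t) :
    AntitoneOn
      (fun t => (∫ x, φ x ∂ μ t) - (C₀ * ⨆ y, ‖iteratedFDeriv ℝ 2 φ y‖) * t)
      (Set.Ici 0) := by
  have hbdd : BddAbove (Set.range fun y => ‖iteratedFDeriv ℝ 2 φ y‖) :=
    (hφ.continuous_iteratedFDeriv (le_refl 2)).norm.bddAbove_range_of_hasCompactSupport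
      (hφc.iteratedFDeriv 2).norm
  set M : ℝ := ⨆ y, ‖iteratedFDeriv ℝ 2 φ y‖ with hMdef
  have hMle : ∀ y, ‖iteratedFDeriv ℝ 2 φ y‖ ≤ M := fun y => le_ciSup hbdd y
  intro a ha b hb hab
  rcases eq_or_lt_of_le hab with rfl | hlt
  · exact le_refl _
  obtain ⟨hint, hineq⟩ := hBrakke a b ha hlt
  have hbound : ∀ t ∈ Set.Icc a b,
      (∫ x, ((inner ℝ (gradient φ x) (H t x) : ℝ) - φ x * ‖H t x‖ ^ 2) ∂ μ t) ≤ C₀ * M :=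
    fun t ht => integral_bound hφ hφ0 hMle hC₀ (μ t) (hmass t (le_trans ha ht.1)) (H t)
  have h2 : (∫ t in a..b,
        ∫ x, ((inner ℝ (gradient φ x) (H t x) : ℝ) - φ x * ‖H t x‖ ^ 2) ∂ μ t) ≤
      ∫ _t in a..b, (C₀ * M) :=
    intervalIntegral.integral_mono_on (le_of_lt hlt) hint intervalIntegrable_const hbound
  rw [intervalIntegral.integral_const, smul_eq_mul] at h2
  simp only
  nlinarith [hineq, h2]
end

section
/- Let n ≥ 1 and let (μ_t)_{t ≥ 0} be a family of Radon measures on ℝⁿ such that sup_{t ≥ 0} μ_t(K) < ∞ for every compact K ⊂ ℝⁿ, and such that for every nonnegative, twice continuously differentiable, compactly supported φ : ℝⁿ → ℝ there exists a constant C(φ) ≥ 0 for which t ↦ ∫φ dμ_t − C(φ)·t is nonincreasing on [0,∞). Then for every t ≥ 0 and every nonnegative continuous compactly supported ψ : ℝⁿ → ℝ, the one-sided limits lim_{s → t⁺} ∫ψ dμ_s exists, when t > 0 the limit lim_{s → t⁻} ∫ψ dμ_s exists, and lim_{s → t⁺} ∫ψ dμ_s ≤ ∫ψ dμ_t ≤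 lim_{s → t⁻} ∫ψ dμ_s. -/
open MeasureTheory Filter Topology
open scoped ENNReal NNReal Convolution

/-- A function that is semi-decreasing (antitone after subtracting `C * s`) on `[0, ∞)`
has a right limit at every `t ≥ 0`, bounded above by its value at `t`. -/
lemma right_of_semi_aux {F : ℝ → ℝ} {C t : ℝ} (ht : 0 ≤ t)
    (hA : AntitoneOn (fun s => F s - C * s) (Set.Ici 0)) :
    ∃ R, Tendsto F (𝓝[>] t) (𝓝 R) ∧ R ≤ F t := by
  set g := fun s => F s - C * s with hg
  have hsub : Set.Ioo t (t + 1) ⊆ Set.Ici 0 := fun s hs => le_trans ht hs.1.le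
  have hne : (Set.Ioo t (t + 1)).Nonempty := ⟨t + 1 / 2, by constructor <;> linarith⟩
  have hub : ∀ y ∈ g '' Set.Ioo t (t + 1), y ≤ g t := by
    rintro y ⟨s, hs, rfl⟩; exact hA ht (hsub hs) hs.1.le
  have hbdd : BddAbove (g '' Set.Ioo t (t + 1)) := ⟨g t, hub⟩
  have h1 := AntitoneOn.tendsto_nhdsWithin_Ioo_right hne (hA.mono hsub) hbdd
  refine ⟨sSup (g '' Set.Ioo t (t + 1)) + C * t, ?_, ?_⟩
  · have h2 : Tendsto (fun s => C * s) (𝓝[>] t) (𝓝 (C * t)) :=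
      ((continuous_const.mul continuous_id).tendsto t).mono_left nhdsWithin_le_nhds
    have h3 := h1.add h2
    have : (fun s => g s + C * s) = F := by funext s; simp [hg]
    rwa [this] at h3
  · have h4 : sSup (g '' Set.Ioo t (t + 1)) ≤ g t := csSup_le (hne.image g) hub
    have : g t + C * t = F t := by simp [hg]
    linarith

/-- A function that is semi-decreasing on `[0, ∞)` has a left limit at every `t > 0`,
bounded below by its value at `t`. -/
lemma left_of_semi_aux {F : ℝ → ℝ} {C t : ℝ} (ht : 0 < t)
    (hA : AntitoneOn (fun s => F s - C * s) (Set.Ici 0)) :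
    ∃ L, Tendsto F (𝓝[<] t) (𝓝 L) ∧ F t ≤ L := by
  set g := fun s => F s - C * s with hg
  have hsub : Set.Ioo 0 t ⊆ Set.Ici 0 := fun s hs => hs.1.le
  have hne : (Set.Ioo 0 t).Nonempty := ⟨t / 2, by constructor <;> linarith⟩
  have hlb : ∀ y ∈ g '' Set.Ioo 0 t, g t ≤ y := by
    rintro y ⟨s, hs, rfl⟩; exact hA hs.1.le ht.le hs.2.le
  have hbdd : BddBelow (g '' Set.Ioo 0 t) := ⟨g t, hlb⟩
  have h1 := AntitoneOn.tendsto_nhdsWithin_Ioo_left hne (hA.mono hsub) hbdd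
  refine ⟨sInf (g '' Set.Ioo 0 t) + C * t, ?_, ?_⟩
  · have h2 : Tendsto (fun s => C * s) (𝓝[<] t) (𝓝 (C * t)) :=
      ((continuous_const.mul continuous_id).tendsto t).mono_left nhdsWithin_le_nhds
    have h3 := h1.add h2
    have : (fun s => g s + C * s) = F := by funext s; simp [hg]
    rwa [this] at h3
  · have h4 : g t ≤ sInf (g '' Set.Ioo 0 t) := le_csInf (hne.image g) hlb
    have : g t + C * t = F t := by simp [hg]
    linarith

/-- Interchange of limits: if `f` is uniformly approximated along a filter by functions
having limits bounded by `b + ε`, then `f` has a limit bounded by `b`. -/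
lemma exists_lim_of_approx_aux {α : Type*} {l : Filter α} [l.NeBot] {f : α → ℝ} {b : ℝ}
    (h : ∀ ε : ℝ, 0 < ε → ∃ (g : α → ℝ) (Rg : ℝ), Tendsto g l (𝓝 Rg) ∧
      (∀ᶠ s in l, |g s - f s| ≤ ε) ∧ Rg ≤ b + ε) :
    ∃ R, Tendsto f l (𝓝 R) ∧ R ≤ b := by
  have hc : Cauchy (Filter.map f l) := by
    refine Metric.cauchy_iff.2 ⟨Filter.map_neBot, fun ε hε => ?_⟩
    obtain ⟨g, Rg, hg, hclose, -⟩ := h (ε / 5) (by positivity)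
    have hev : ∀ᶠ s in l, |g s - f s| ≤ ε / 5 ∧ dist (g s) Rg < ε / 5 :=
      hclose.and (Metric.tendsto_nhds.1 hg (ε / 5) (by positivity))
    refine ⟨f '' {s | |g s - f s| ≤ ε / 5 ∧ dist (g s) Rg < ε / 5}, Filter.image_mem_map hev, ?_⟩
    rintro x ⟨s, hs, rfl⟩ y ⟨s', hs', rfl⟩
    have h1 : dist (f s) (g s) ≤ ε / 5 := by rw [Real.dist_eq, abs_sub_comm]; exact hs.1
    have h2 : dist (f s') (g s') ≤ ε / 5 := by rw [Real.dist_eq, abs_sub_comm]; exact hs'.1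
    have h3 : dist (f s) (f s') ≤ dist (f s) (g s) + dist (g s) (g s') + dist (g s') (f s') :=
      dist_triangle4 _ _ _ _
    have h4 : dist (g s) (g s') ≤ dist (g s) Rg + dist (g s') Rg := dist_triangle_right _ _ _
    have h5 : dist (g s') (f s') = dist (f s') (g s') := dist_comm _ _
    have := hs.2; have := hs'.2
    linarith
  obtain ⟨R, hR⟩ := cauchy_map_iff_exists_tendsto.1 hc
  refine ⟨R, hR, ?_⟩
  refine le_of_forall_pos_le_add fun ε hε => ?_
  obtain ⟨g, Rg, hg, hclose, hRg⟩ := h (ε / 2) (by positivity)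
  have hdist : |R - Rg| ≤ ε / 2 := by
    have h1 : Tendsto (fun s => f s - g s) l (𝓝 (R - Rg)) := hR.sub hg
    refine le_of_tendsto h1.abs (hclose.mono fun s hs => ?_)
    rwa [abs_sub_comm]
  have : R ≤ Rg + ε / 2 := by
    have := abs_le.1 hdist; linarith [this.2]
  linarith

/-- Uniform approximation of a nonnegative continuous compactly supported function by a
nonnegative `C²` compactly supported function, supported in the `1`-thickening. -/
lemma smooth_approx_aux {n : ℕ} (ψ : EuclideanSpace ℝ (Fin n) → ℝ)
    (hψ : Continuous ψ) (hψc : HasCompactSupport ψ) (hψ0 : ∀ x, 0 ≤ ψ x)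
    {ε : ℝ} (hε : 0 < ε) :
    ∃ φ : EuclideanSpace ℝ (Fin n) → ℝ, ContDiff ℝ 2 φ ∧ HasCompactSupport φ ∧
      (∀ x, 0 ≤ φ x) ∧ (∀ x, |φ x - ψ x| ≤ ε) ∧
      ∀ x, x ∉ Metric.cthickening 1 (tsupport ψ) → φ x = 0 := by
  obtain ⟨δ, hδ0, hδ⟩ := Metric.uniformContinuous_iff.mp
    (hψc.uniformContinuous_of_continuous hψ) ε hε
  set r := min δ 1 with hr
  have hr0 : 0 < r := lt_min hδ0 one_pos
  set b : ContDiffBump (0 : EuclideanSpace ℝ (Fin n)) := ⟨r / 2, r, by positivity, by linarith⟩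
    with hb
  set φ := b.normed volume ⋆[ContinuousLinearMap.lsmul ℝ ℝ, volume] ψ with hφ
  refine ⟨φ, ?_, ?_, ?_, ?_, ?_⟩
  · exact b.hasCompactSupport_normed.contDiff_convolution_left _ (b.contDiff_normed)
      (hψ.locallyIntegrable)
  · exact b.hasCompactSupport_normed.convolution _ hψc
  · intro x
    rw [hφ, convolution_def]
    refine integral_nonneg fun y => ?_
    simp only [ContinuousLinearMap.lsmul_apply, smul_eq_mul]
    exact mul_nonneg (b.nonneg_normed y) (hψ0 _)
  · intro x
    have := b.dist_normed_convolution_le (μ := volume) hψ.aestronglyMeasurable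
      (x₀ := x) (ε := ε) (fun y hy => by
        refine (hδ ?_).le
        calc dist y x < b.rOut := Metric.mem_ball.1 hy
          _ ≤ δ := min_le_left _ _)
    rwa [Real.dist_eq] at this
  · intro x hx
    by_contra hne
    have hx' : x ∈ Function.support φ := hne
    have hsub := support_convolution_subset (ContinuousLinearMap.lsmul ℝ ℝ)
      (f := b.normed volume) (g := ψ) (μ := volume)
    obtain ⟨p, hp, q, hq, rfl⟩ := hsub hx'
    refine hx (Metric.mem_cthickening_of_dist_le (p + q) q 1 _ (subset_tsupport _ hq) ?_)
    have heq : dist (p + q) q = ‖p‖ := by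
      rw [dist_eq_norm]; congr 1; abel
    rw [heq]
    rw [b.support_normed_eq] at hp
    have : ‖p‖ < r := by simpa [Metric.mem_ball, dist_eq_norm] using hp
    exact this.le.trans (min_le_right _ _)

/-- If two continuous compactly supported functions vanish outside a compact set `K` and are
uniformly `ε`-close, their integrals differ by at most `ε * ν K`. -/
lemma integral_diff_bound_aux {n : ℕ} (ν : Measure (EuclideanSpace ℝ (Fin n)))
    [IsLocallyFiniteMeasure ν]
    {f g : EuclideanSpace ℝ (Fin n) → ℝ}
    (hf : Continuous f) (hfc : HasCompactSupport f)
    (hg : Continuous g) (hgc : HasCompactSupport g)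
    {K : Set (EuclideanSpace ℝ (Fin n))} (hK : IsCompact K) (hKm : MeasurableSet K)
    (hfK : ∀ x, x ∉ K → f x = 0) (hgK : ∀ x, x ∉ K → g x = 0)
    {ε : ℝ} (hd : ∀ x, |f x - g x| ≤ ε) :
    |∫ x, f x ∂ν - ∫ x, g x ∂ν| ≤ ε * (ν K).toReal := by
  have hfi := hf.integrable_of_hasCompactSupport hfc (μ := ν)
  have hgi := hg.integrable_of_hasCompactSupport hgc (μ := ν)
  rw [← integral_sub hfi hgi]
  have hii : Integrable (K.indicator fun _ => ε) ν :=
    (integrable_indicator_iff hKm).2 (integrableOn_const hK.measure_lt_top.ne)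
  calc |∫ x, (f x - g x) ∂ν| ≤ ∫ x, |f x - g x| ∂ν := by
        simpa [Real.norm_eq_abs] using
          norm_integral_le_integral_norm (μ := ν) (f := fun x => f x - g x)
    _ ≤ ∫ x, (K.indicator fun _ => ε) x ∂ν := by
        refine integral_mono (hfi.sub hgi).abs hii fun x => ?_
        by_cases hx : x ∈ K
        · simpa [Set.indicator_of_mem hx] using hd x
        · simp [Set.indicator_of_notMem hx, hfK x hx, hgK x hx]
    _ = ε * (ν K).toReal := by
        rw [integral_indicator_const _ hKm, smul_eq_mul, mul_comm]; rfl

/-- Existence of one-sided limits of the mass of a semi-decreasing family of Radon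
measures, together with the upper-semicontinuity inequalities (Lemma 4.1 (2)). -/
theorem stmt_4 (n : ℕ) (hn : 1 ≤ n)
    (μ : ℝ → Measure (EuclideanSpace ℝ (Fin n)))
    (hrad : ∀ t, IsLocallyFiniteMeasure (μ t))
    (hmass : ∀ K : Set (EuclideanSpace ℝ (Fin n)), IsCompact K →
      ∃ C : ℝ≥0∞, C ≠ ⊤ ∧ ∀ t, 0 ≤ t → μ t K ≤ C)
    (hsemi : ∀ φ : EuclideanSpace ℝ (Fin n) → ℝ,
      ContDiff ℝ 2 φ → HasCompactSupport φ → (∀ x, 0 ≤ φ x) →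
      ∃ C : ℝ, 0 ≤ C ∧ AntitoneOn (fun t => (∫ x, φ x ∂ μ t) - C * t) (Set.Ici 0))
    (t : ℝ) (ht : 0 ≤ t)
    (ψ : EuclideanSpace ℝ (Fin n) → ℝ)
    (hψ : Continuous ψ) (hψc : HasCompactSupport ψ) (hψ0 : ∀ x, 0 ≤ ψ x) :
    ∃ R : ℝ, Tendsto (fun s => ∫ x, ψ x ∂ μ s) (𝓝[>] t) (𝓝 R) ∧
      R ≤ ∫ x, ψ x ∂ μ t ∧
      (0 < t → ∃ L : ℝ, Tendsto (fun s => ∫ x, ψ x ∂ μ s) (𝓝[<] t) (𝓝 L) ∧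
        (∫ x, ψ x ∂ μ t) ≤ L) := by
  classical
  set K' := Metric.cthickening 1 (tsupport ψ) with hK'def
  have hK'c : IsCompact K' := hψc.cthickening
  have hK'm : MeasurableSet K' := Metric.isClosed_cthickening.measurableSet
  obtain ⟨M, hMt, hMb⟩ := hmass K' hK'c
  set Mr := M.toReal with hMrdef
  have hMr0 : 0 ≤ Mr := ENNReal.toReal_nonneg
  set f := fun s => ∫ x, ψ x ∂ μ s with hfdef
  have happrox : ∀ ε : ℝ, 0 < ε → ∃ φ : EuclideanSpace ℝ (Fin n) → ℝ,
      ContDiff ℝ 2 φ ∧ HasCompactSupport φ ∧ (∀ x, 0 ≤ φ x) ∧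
      ∀ s, 0 ≤ s → |(∫ x, φ x ∂ μ s) - f s| ≤ ε := by
    intro ε hε
    have hMr1 : (0:ℝ) < Mr + 1 := by linarith
    obtain ⟨φ, hφ2, hφc, hφ0, hφd, hφK⟩ :=
      smooth_approx_aux ψ hψ hψc hψ0 (ε := ε / (Mr + 1)) (by positivity)
    refine ⟨φ, hφ2, hφc, hφ0, fun s hs => ?_⟩
    haveI := hrad s
    have hψK : ∀ x, x ∉ K' → ψ x = 0 := fun x hx =>
      image_eq_zero_of_notMem_tsupport fun hxx => hx (Metric.self_subset_cthickening _ hxx)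
    have hb := integral_diff_bound_aux (μ s) hφ2.continuous hφc hψ hψc hK'c hK'm hφK hψK hφd
    refine hb.trans ?_
    have h1 : ((μ s) K').toReal ≤ Mr := ENNReal.toReal_mono hMt (hMb s hs)
    calc ε / (Mr + 1) * ((μ s) K').toReal ≤ ε / (Mr + 1) * (Mr + 1) := by
          apply mul_le_mul_of_nonneg_left (by linarith) (by positivity)
      _ = ε := div_mul_cancel₀ ε (by linarith)
  have hright : ∃ R, Tendsto f (𝓝[>] t) (𝓝 R) ∧ R ≤ f t := by
    refine exists_lim_of_approx_aux fun ε hε => ?_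
    obtain ⟨φ, hφ2, hφc, hφ0, hφd⟩ := happrox ε hε
    obtain ⟨C, hC0, hCa⟩ := hsemi φ hφ2 hφc hφ0
    obtain ⟨R, hRt, hRle⟩ := right_of_semi_aux ht hCa
    refine ⟨fun s => ∫ x, φ x ∂ μ s, R, hRt, ?_, ?_⟩
    · filter_upwards [self_mem_nhdsWithin] with s hs
      exact hφd s (le_trans ht (le_of_lt hs))
    · have h1 := abs_le.1 (hφd t ht)
      linarith [h1.1, h1.2]
  obtain ⟨R, hR, hRle⟩ := hright
  refine ⟨R, hR, hRle, fun ht' => ?_⟩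
  have hev0 : ∀ᶠ s in 𝓝[<] t, (0:ℝ) ≤ s := by
    filter_upwards [(eventually_gt_nhds ht').filter_mono nhdsWithin_le_nhds] with s hs
    exact hs.le
  have hleft : ∃ R', Tendsto (fun s => -(f s)) (𝓝[<] t) (𝓝 R') ∧ R' ≤ -(f t) := by
    refine exists_lim_of_approx_aux fun ε hε => ?_
    obtain ⟨φ, hφ2, hφc, hφ0, hφd⟩ := happrox ε hε
    obtain ⟨C, hC0, hCa⟩ := hsemi φ hφ2 hφc hφ0
    obtain ⟨L, hLt, hLge⟩ := left_of_semi_aux ht' hCa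
    refine ⟨fun s => -(∫ x, φ x ∂ μ s), -L, hLt.neg, ?_, ?_⟩
    · filter_upwards [hev0] with s hs
      have h1 := hφd s hs
      rw [show -(∫ x, φ x ∂ μ s) - -(f s) = -((∫ x, φ x ∂ μ s) - f s) by ring, abs_neg]
      exact h1
    · have h1 := abs_le.1 (hφd t ht)
      linarith [h1.1, h1.2]
  obtain ⟨R', hR't, hR'le⟩ := hleft
  refine ⟨-R', ?_, by linarith⟩
  have h2 := hR't.neg
  simpa using h2
end

section
/- Let X be a measurable space, let μ and μ_j (j ∈ ℕ) be measures on X, and let f, f_j, φ : X → [0,∞] be measurable functions. Suppose that for every s ∈ (0,∞), ∫_{{x : s < φ(x)}} f dμ ≤ liminf_{j→∞} ∫_{{x : s < φ(x)}} f_j dμ_j. Then ∫ φ·f dμ ≤ liminf_{j→∞} ∫ φ·f_j dμ_j, where all integrals are Lebesgue integrals with values in [0,∞]. -/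
open MeasureTheory Filter Topology
open scoped ENNReal NNReal

namespace Stmt7Aux

/-- Mesh size of the `n`-th dyadic discretization. -/
noncomputable def δ (n : ℕ) : ℝ≥0∞ := (2 : ℝ≥0∞)⁻¹ ^ n

lemma δ_ne_zero (n : ℕ) : δ n ≠ 0 := by
  simp [δ, pow_eq_zero_iff]

lemma δ_ne_top (n : ℕ) : δ n ≠ ⊤ :=
  ENNReal.pow_ne_top (by simp)

lemma δ_pos (n : ℕ) : 0 < δ n := pos_iff_ne_zero.2 (δ_ne_zero n)

lemma δ_antitone : Antitone δ := fun m n hmn =>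
  pow_le_pow_right_of_le_one' (ENNReal.inv_le_one.2 ENNReal.one_lt_two.le) hmn

/-- The `j`-th level of the `n`-th discretization. -/
noncomputable def lev (n j : ℕ) : ℝ≥0∞ := ((j : ℝ≥0∞) + 1) * δ n

lemma lev_pos (n j : ℕ) : 0 < lev n j := by
  exact ENNReal.mul_pos (by simp) (δ_ne_zero n)

lemma lev_ne_top (n j : ℕ) : lev n j ≠ ⊤ := by
  apply ENNReal.mul_ne_top _ (δ_ne_top n)
  simp

/-- One layer of the discretization. -/
noncomputable def t (n j : ℕ) (c : ℝ≥0∞) : ℝ≥0∞ := if lev n j < c then δ n else 0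

/-- The discretized value of `c`. -/
noncomputable def g (n : ℕ) (c : ℝ≥0∞) : ℝ≥0∞ := ∑' j : ℕ, t n j c

lemma sum_t_le (n : ℕ) (c : ℝ≥0∞) (m : ℕ) :
    ∑ j ∈ Finset.range m, t n j c ≤ min ((m : ℝ≥0∞) * δ n) c := by
  induction m with
  | zero => simp
  | succ m ih =>
      rw [Finset.sum_range_succ]
      by_cases hlt : lev n m < c
      · have h1 : t n m c = δ n := if_pos hlt
        rw [h1]
        have h2 : ∑ j ∈ Finset.range m, t n j c ≤ (m : ℝ≥0∞) * δ n :=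
          ih.trans (min_le_left _ _)
        have h3 : (m : ℝ≥0∞) * δ n + δ n = ((m : ℕ) + 1 : ℝ≥0∞) * δ n := by ring
        refine le_min ?_ ?_
        · calc ∑ j ∈ Finset.range m, t n j c + δ n ≤ (m : ℝ≥0∞) * δ n + δ n :=
                add_le_add_left h2 _
            _ = ((m + 1 : ℕ) : ℝ≥0∞) * δ n := by push_cast; ring
        · calc ∑ j ∈ Finset.range m, t n j c + δ n ≤ (m : ℝ≥0∞) * δ n + δ n :=
                add_le_add_left h2 _
            _ = lev n m := by simp [lev]; ring
            _ ≤ c := hlt.le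
      · have h1 : t n m c = 0 := if_neg hlt
        rw [h1, add_zero]
        refine ih.trans (min_le_min ?_ le_rfl)
        gcongr
        exact_mod_cast Nat.le_succ m

lemma g_le (n : ℕ) (c : ℝ≥0∞) : g n c ≤ c := by
  rw [g, ENNReal.tsum_eq_iSup_nat]
  exact iSup_le fun m => (sum_t_le n c m).trans (min_le_right _ _)

lemma g_ge (n m : ℕ) {c : ℝ≥0∞} (h : lev n m < c) : lev n m ≤ g n c := by
  have key : ∑ j ∈ Finset.range (m + 1), t n j c = lev n m := by
    have : ∀ j ∈ Finset.range (m + 1), t n j c = δ n := by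
      intro j hj
      apply if_pos
      refine lt_of_le_of_lt ?_ h
      unfold lev
      gcongr
      exact_mod_cast Nat.lt_succ_iff.mp (Finset.mem_range.mp hj)
    rw [Finset.sum_congr rfl this, Finset.sum_const, Finset.card_range, nsmul_eq_mul, lev]
    push_cast; ring
  calc lev n m = ∑ j ∈ Finset.range (m + 1), t n j c := key.symm
    _ ≤ g n c := ENNReal.sum_le_tsum _

lemma le_liminf_g (c : ℝ≥0∞) : c ≤ liminf (fun n => g n c) atTop := by
  rw [le_liminf_iff]
  intro b hb
  by_cases hc : c = ⊤
  · refine Eventually.of_forall fun n => ?_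
    obtain ⟨m, hm⟩ := ENNReal.exists_nat_mul_gt (δ_ne_zero n) hb.ne_top
    have hlev : lev n m < c := hc ▸ (lev_ne_top n m).lt_top
    calc b < (m : ℝ≥0∞) * δ n := hm
      _ ≤ lev n m := by unfold lev; gcongr; exact le_self_add
      _ ≤ g n c := g_ge n m hlev
  · have hbne : b ≠ ⊤ := (hb.trans (lt_top_iff_ne_top.2 hc)).ne
    have hpos : (0 : ℝ≥0∞) < c - b := tsub_pos_of_lt hb
    obtain ⟨N, hN⟩ := ENNReal.exists_inv_two_pow_lt hpos.ne'
    filter_upwards [eventually_ge_atTop N] with n hn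
    have hδ : δ n < c - b := lt_of_le_of_lt (δ_antitone hn) hN
    have hP : ∃ m : ℕ, b < lev n m := by
      obtain ⟨m, hm⟩ := ENNReal.exists_nat_mul_gt (δ_ne_zero n) hbne
      exact ⟨m, hm.trans_le (by unfold lev; gcongr; exact le_self_add)⟩
    set m := Nat.find hP with hm_def
    have hbm : b < lev n m := Nat.find_spec hP
    have hlev : lev n m < c := by
      rcases Nat.eq_zero_or_pos m with hm0 | hm0
      · have : lev n m = δ n := by simp [lev, hm0]
        rw [this]
        exact hδ.trans_le tsub_le_self
      · obtain ⟨k, hk⟩ : ∃ k, m = k + 1 := ⟨m - 1, (Nat.succ_pred_eq_of_pos hm0).symm⟩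
        have hklt : k < Nat.find hP := by rw [← hm_def, hk]; exact Nat.lt_succ_self k
        have hkb : ¬ b < lev n k := Nat.find_min hP hklt
        push_neg at hkb
        rw [hk]
        calc lev n (k + 1) = lev n k + δ n := by unfold lev; push_cast; ring
          _ ≤ b + δ n := add_le_add_left hkb _
          _ < b + (c - b) := ENNReal.add_lt_add_left hbne hδ
          _ = c := add_tsub_cancel_of_le hb.le
    exact hbm.trans_le (g_ge n m hlev)

lemma measurable_g_comp {X : Type*} [MeasurableSpace X] {φ : X → ℝ≥0∞}
    (hφ : Measurable φ) (n : ℕ) : Measurable (fun x => g n (φ x)) := by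
  apply Measurable.ennreal_tsum
  intro j
  exact Measurable.ite (hφ measurableSet_Ioi) measurable_const measurable_const

lemma swap {X : Type*} [MeasurableSpace X] (ν : Measure X) {φ fg : X → ℝ≥0∞}
    (hφ : Measurable φ) (hfg : Measurable fg) (n : ℕ) :
    ∫⁻ x, g n (φ x) * fg x ∂ν
      = ∑' j : ℕ, δ n * ∫⁻ x in {x | lev n j < φ x}, fg x ∂ν := by
  have hmeas : ∀ j : ℕ, MeasurableSet {x | lev n j < φ x} := fun j => hφ measurableSet_Ioi
  have step1 : ∀ x, g n (φ x) * fg x = ∑' j : ℕ, t n j (φ x) * fg x := by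
    intro x
    rw [g, ENNReal.tsum_mul_right]
  have step2 : ∀ (j : ℕ) (x : X),
      t n j (φ x) * fg x = δ n * ({x | lev n j < φ x}.indicator fg x) := by
    intro j x
    by_cases hx : lev n j < φ x
    · rw [t, if_pos hx, Set.indicator_of_mem (show x ∈ {x | lev n j < φ x} from hx) fg]
    · rw [t, if_neg hx,
        Set.indicator_of_notMem (show x ∉ {x | lev n j < φ x} from hx) fg, zero_mul, mul_zero]
  simp_rw [step1, step2]
  rw [lintegral_tsum (fun j => ((hfg.indicator (hmeas j)).const_mul (δ n)).aemeasurable)]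
  congr 1
  funext j
  rw [lintegral_const_mul _ (hfg.indicator (hmeas j)), lintegral_indicator (hmeas j)]

end Stmt7Aux

/-- Layer-cake/Fatou argument: lower semicontinuity on superlevel sets implies lower
semicontinuity of the weighted integral (used in the proof of Theorem 4.3). -/
theorem stmt_7 {X : Type*} [MeasurableSpace X]
    (μ : Measure X) (μs : ℕ → Measure X)
    (f : X → ℝ≥0∞) (fs : ℕ → X → ℝ≥0∞) (φ : X → ℝ≥0∞)
    (hf : Measurable f) (hfs : ∀ j, Measurable (fs j)) (hφ : Measurable φ)
    (h : ∀ s : ℝ≥0∞, 0 < s → s ≠ ⊤ →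
      (∫⁻ x in {x | s < φ x}, f x ∂ μ) ≤
        liminf (fun j => ∫⁻ x in {x | s < φ x}, fs j x ∂ μs j) atTop) :
    (∫⁻ x, φ x * f x ∂ μ) ≤ liminf (fun j => ∫⁻ x, φ x * fs j x ∂ μs j) atTop := by
  classical
  open Stmt7Aux in
  set L : ℝ≥0∞ := liminf (fun j => ∫⁻ x, φ x * fs j x ∂ μs j) atTop with hL
  -- Step B: for every n, the discretized integral is at most L.
  have stepB : ∀ n : ℕ, (∫⁻ x, Stmt7Aux.g n (φ x) * f x ∂ μ) ≤ L := by
    intro n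
    rw [Stmt7Aux.swap μ hφ hf n]
    have hterm : ∀ j : ℕ,
        Stmt7Aux.δ n * ∫⁻ x in {x | Stmt7Aux.lev n j < φ x}, f x ∂ μ
          ≤ liminf (fun i =>
              Stmt7Aux.δ n * ∫⁻ x in {x | Stmt7Aux.lev n j < φ x}, fs i x ∂ μs i) atTop := by
      intro j
      have h1 := h (Stmt7Aux.lev n j) (Stmt7Aux.lev_pos n j) (Stmt7Aux.lev_ne_top n j)
      calc Stmt7Aux.δ n * ∫⁻ x in {x | Stmt7Aux.lev n j < φ x}, f x ∂ μ
          ≤ Stmt7Aux.δ n *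
            liminf (fun i => ∫⁻ x in {x | Stmt7Aux.lev n j < φ x}, fs i x ∂ μs i) atTop :=
            mul_le_mul_right h1 _
        _ = liminf (fun _ : ℕ => Stmt7Aux.δ n) atTop *
            liminf (fun i => ∫⁻ x in {x | Stmt7Aux.lev n j < φ x}, fs i x ∂ μs i) atTop := by
            rw [liminf_const]
        _ ≤ _ := ENNReal.le_liminf_mul
    calc (∑' j : ℕ, Stmt7Aux.δ n * ∫⁻ x in {x | Stmt7Aux.lev n j < φ x}, f x ∂ μ)
        ≤ ∑' j : ℕ, liminf (fun i =>
            Stmt7Aux.δ n * ∫⁻ x in {x | Stmt7Aux.lev n j < φ x}, fs i x ∂ μs i) atTop :=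
          ENNReal.tsum_le_tsum hterm
      _ = ∫⁻ j, liminf (fun i =>
            Stmt7Aux.δ n * ∫⁻ x in {x | Stmt7Aux.lev n j < φ x}, fs i x ∂ μs i) atTop
            ∂(Measure.count : Measure ℕ) := (lintegral_count _).symm
      _ ≤ liminf (fun i => ∫⁻ j,
            Stmt7Aux.δ n * ∫⁻ x in {x | Stmt7Aux.lev n j < φ x}, fs i x ∂ μs i
            ∂(Measure.count : Measure ℕ)) atTop := by
          refine lintegral_liminf_le (fun i => ?_)
          exact measurable_from_top
      _ = liminf (fun i => ∑' j : ℕ,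
            Stmt7Aux.δ n * ∫⁻ x in {x | Stmt7Aux.lev n j < φ x}, fs i x ∂ μs i) atTop := by
          simp_rw [lintegral_count]
      _ = liminf (fun i => ∫⁻ x, Stmt7Aux.g n (φ x) * fs i x ∂ μs i) atTop := by
          apply Filter.liminf_congr
          exact Eventually.of_forall fun i => (Stmt7Aux.swap (μs i) hφ (hfs i) n).symm
      _ ≤ L := by
          refine liminf_le_liminf (Eventually.of_forall fun i => ?_)
          refine lintegral_mono fun x => ?_
          exact mul_le_mul_left (Stmt7Aux.g_le n (φ x)) _
  -- Step A: pointwise layer-cake lower bound and Fatou in n.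
  have stepA : (∫⁻ x, φ x * f x ∂ μ)
      ≤ liminf (fun n => ∫⁻ x, Stmt7Aux.g n (φ x) * f x ∂ μ) atTop := by
    have hpt : ∀ x, φ x * f x ≤ liminf (fun n => Stmt7Aux.g n (φ x) * f x) atTop := by
      intro x
      calc φ x * f x ≤ liminf (fun n => Stmt7Aux.g n (φ x)) atTop * f x :=
            mul_le_mul_left (Stmt7Aux.le_liminf_g (φ x)) _
        _ = liminf (fun n => Stmt7Aux.g n (φ x)) atTop * liminf (fun _ : ℕ => f x) atTop := by
            rw [liminf_const]
        _ ≤ _ := ENNReal.le_liminf_mul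
    calc (∫⁻ x, φ x * f x ∂ μ)
        ≤ ∫⁻ x, liminf (fun n => Stmt7Aux.g n (φ x) * f x) atTop ∂ μ := lintegral_mono hpt
      _ ≤ liminf (fun n => ∫⁻ x, Stmt7Aux.g n (φ x) * f x ∂ μ) atTop :=
          lintegral_liminf_le fun n => (Stmt7Aux.measurable_g_comp hφ n).mul hf
  refine stepA.trans ?_
  calc liminf (fun n => ∫⁻ x, Stmt7Aux.g n (φ x) * f x ∂ μ) atTop
      ≤ liminf (fun _ : ℕ => L) atTop := liminf_le_liminf (Eventually.of_forall stepB)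
    _ = L := liminf_const L
end

section
/- Let n ≥ 1 and let μ̄ be a locally finite Borel measure on ℝⁿ × ℝ that is invariant under all translations in the last coordinate, i.e., the pushforward of μ̄ under the map (x,z) ↦ (x, z+τ) equals μ̄ for every τ ∈ ℝ. Then there exists a locally finite Borel measure μ on ℝⁿ such that μ̄ is the product measure of μ with one-dimensional Lebesgue measure: μ̄ = μ × L¹. -/
open MeasureTheory Filter Topology
open scoped ENNReal NNReal

section aux

variable {n : ℕ}

/-- The slice measure `t ↦ μbar (s ×ˢ t)` on `ℝ`. -/
noncomputable def sliceMeasure (μbar : Measure (EuclideanSpace ℝ (Fin n) × ℝ))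
    (s : Set (EuclideanSpace ℝ (Fin n))) : Measure ℝ :=
  Measure.map Prod.snd (μbar.restrict (s ×ˢ Set.univ))

lemma sliceMeasure_apply (μbar : Measure (EuclideanSpace ℝ (Fin n) × ℝ))
    {s : Set (EuclideanSpace ℝ (Fin n))} (hs : MeasurableSet s)
    {t : Set ℝ} (ht : MeasurableSet t) :
    sliceMeasure μbar s t = μbar (s ×ˢ t) := by
  rw [sliceMeasure, Measure.map_apply measurable_snd ht,
    Measure.restrict_apply (measurable_snd ht)]
  congr 1
  ext p
  simp [Set.mem_prod, and_comm]

lemma sliceMeasure_invariant (μbar : Measure (EuclideanSpace ℝ (Fin n) × ℝ))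
    (hinv : ∀ τ : ℝ,
      Measure.map (fun p : EuclideanSpace ℝ (Fin n) × ℝ => (p.1, p.2 + τ)) μbar = μbar)
    (s : Set (EuclideanSpace ℝ (Fin n))) (hs : MeasurableSet s) :
    (sliceMeasure μbar s).IsAddLeftInvariant := by
  constructor
  intro τ
  have hT : Measurable (fun p : EuclideanSpace ℝ (Fin n) × ℝ => (p.1, p.2 + τ)) :=
    measurable_fst.prodMk (measurable_snd.add_const τ)
  have hpre : (fun p : EuclideanSpace ℝ (Fin n) × ℝ => (p.1, p.2 + τ)) ⁻¹'
      (s ×ˢ Set.univ) = s ×ˢ Set.univ := by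
    ext p; simp
  have key : Measure.map (fun p : EuclideanSpace ℝ (Fin n) × ℝ => (p.1, p.2 + τ))
      (μbar.restrict (s ×ˢ Set.univ)) = μbar.restrict (s ×ˢ Set.univ) := by
    rw [← hpre, ← Measure.restrict_map hT (hs.prod MeasurableSet.univ), hinv τ, hpre]
  have hcomp : (fun x : ℝ => τ + x) ∘ Prod.snd =
      Prod.snd ∘ (fun p : EuclideanSpace ℝ (Fin n) × ℝ => (p.1, p.2 + τ)) := by
    funext p; simp [add_comm]
  calc Measure.map (fun x => τ + x) (sliceMeasure μbar s)
      = Measure.map ((fun x : ℝ => τ + x) ∘ Prod.snd) (μbar.restrict (s ×ˢ Set.univ)) := by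
        rw [sliceMeasure, Measure.map_map (measurable_const_add τ) measurable_snd]
    _ = Measure.map (Prod.snd ∘ (fun p : EuclideanSpace ℝ (Fin n) × ℝ => (p.1, p.2 + τ)))
        (μbar.restrict (s ×ˢ Set.univ)) := by rw [hcomp]
    _ = sliceMeasure μbar s := by
        rw [← Measure.map_map measurable_snd hT, key, sliceMeasure]

end aux

/-- A z-invariant locally finite Borel measure on `ℝⁿ × ℝ` splits as a product of a
locally finite measure on `ℝⁿ` with one-dimensional Lebesgue measure (Lemma 5.6 (1)). -/
theorem stmt_10 (n : ℕ) (hn : 1 ≤ n)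
    (μbar : Measure (EuclideanSpace ℝ (Fin n) × ℝ))
    (hrad : IsLocallyFiniteMeasure μbar)
    (hinv : ∀ τ : ℝ,
      Measure.map (fun p : EuclideanSpace ℝ (Fin n) × ℝ => (p.1, p.2 + τ)) μbar = μbar) :
    ∃ μ : Measure (EuclideanSpace ℝ (Fin n)),
      IsLocallyFiniteMeasure μ ∧ μbar = μ.prod volume := by
  -- μ s := μbar (s ×ˢ Ioc 0 1)
  set μ : Measure (EuclideanSpace ℝ (Fin n)) :=
    Measure.map Prod.fst (μbar.restrict (Set.univ ×ˢ Set.Ioc (0:ℝ) 1)) with hμdef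
  have hμapply : ∀ {s : Set (EuclideanSpace ℝ (Fin n))}, MeasurableSet s →
      μ s = μbar (s ×ˢ Set.Ioc (0:ℝ) 1) := by
    intro s hs
    rw [hμdef, Measure.map_apply measurable_fst hs,
      Measure.restrict_apply (measurable_fst hs)]
    congr 1
    ext p
    simp [Set.mem_prod]
  -- key rectangle formula for bounded s
  have hbdd : ∀ (R : ℝ) (s : Set (EuclideanSpace ℝ (Fin n))), MeasurableSet s →
      s ⊆ Metric.closedBall 0 R → ∀ t : Set ℝ, MeasurableSet t →
      μbar (s ×ˢ t) = μbar (s ×ˢ Set.Ioc (0:ℝ) 1) * volume t := by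
    intro R s hs hsub t ht
    haveI hinvν : (sliceMeasure μbar s).IsAddLeftInvariant :=
      sliceMeasure_invariant μbar hinv s hs
    haveI hfin : IsFiniteMeasureOnCompacts (sliceMeasure μbar s) := by
      constructor
      intro K hK
      rw [sliceMeasure_apply μbar hs hK.measurableSet]
      have hsubset : s ×ˢ K ⊆ Metric.closedBall (0 : EuclideanSpace ℝ (Fin n)) R ×ˢ K :=
        Set.prod_mono hsub subset_rfl
      have hcpt : IsCompact (Metric.closedBall (0 : EuclideanSpace ℝ (Fin n)) R ×ˢ K) :=
        (isCompact_closedBall _ _).prod hK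
      exact lt_of_le_of_lt (measure_mono hsubset) hcpt.measure_lt_top
    have heq := Measure.isAddLeftInvariant_eq_smul (sliceMeasure μbar s) (volume : Measure ℝ)
    have hval : ∀ u : Set ℝ, MeasurableSet u →
        μbar (s ×ˢ u) =
          Measure.addHaarScalarFactor (sliceMeasure μbar s) (volume : Measure ℝ) * volume u := by
      intro u hu
      rw [← sliceMeasure_apply μbar hs hu]
      conv_lhs => rw [heq]
      rw [Measure.smul_apply, ENNReal.smul_def, smul_eq_mul]
    have hc : (Measure.addHaarScalarFactor (sliceMeasure μbar s) (volume : Measure ℝ) : ℝ≥0∞) =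
        μbar (s ×ˢ Set.Ioc (0:ℝ) 1) := by
      have h1 := hval (Set.Ioc 0 1) measurableSet_Ioc
      simpa using h1.symm
    rw [hval t ht, hc]
  -- general rectangle formula
  have hrect : ∀ (s : Set (EuclideanSpace ℝ (Fin n))), MeasurableSet s →
      ∀ t : Set ℝ, MeasurableSet t → μbar (s ×ˢ t) = μ s * volume t := by
    intro s hs t ht
    -- approximate s by bounded pieces
    set sk : ℕ → Set (EuclideanSpace ℝ (Fin n)) :=
      fun k => s ∩ Metric.closedBall 0 k with hskdef
    have hskmeas : ∀ k, MeasurableSet (sk k) :=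
      fun k => hs.inter measurableSet_closedBall
    have hmono : Monotone sk := fun i j hij =>
      Set.inter_subset_inter subset_rfl (Metric.closedBall_subset_closedBall (by exact_mod_cast hij))
    have hunion : (⋃ k, sk k) = s := by
      ext x
      simp only [Set.mem_iUnion, hskdef, Set.mem_inter_iff, Metric.mem_closedBall]
      constructor
      · rintro ⟨k, hx, -⟩; exact hx
      · intro hx
        obtain ⟨k, hk⟩ := exists_nat_ge (dist x 0)
        exact ⟨k, hx, hk⟩
    have hprodunion : (⋃ k, sk k ×ˢ t) = s ×ˢ t := by
      rw [← hunion, Set.iUnion_prod_const]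
    have h1 : μbar (s ×ˢ t) = ⨆ k, μbar (sk k ×ˢ t) := by
      rw [← hprodunion]
      exact Directed.measure_iUnion
        (Monotone.directed_le fun i j hij => Set.prod_mono (hmono hij) subset_rfl)
    have h2 : μ s = ⨆ k, μ (sk k) := by
      rw [hμapply hs, ← hunion, Set.iUnion_prod_const]
      rw [Directed.measure_iUnion
        (Monotone.directed_le fun i j hij => Set.prod_mono (hmono hij) subset_rfl)]
      exact iSup_congr fun k => (hμapply (hskmeas k)).symm
    rw [h1, h2, ENNReal.iSup_mul]
    refine iSup_congr fun k => ?_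
    rw [hbdd k (sk k) (hskmeas k) Set.inter_subset_right t ht, hμapply (hskmeas k)]
  -- μ is locally finite
  have hμfin : IsLocallyFiniteMeasure μ := by
    constructor
    intro x
    refine ⟨Metric.closedBall x 1, Metric.closedBall_mem_nhds x one_pos, ?_⟩
    rw [hμapply measurableSet_closedBall]
    have hsub : Metric.closedBall x 1 ×ˢ Set.Ioc (0:ℝ) 1 ⊆
        Metric.closedBall x 1 ×ˢ Set.Icc (0:ℝ) 1 :=
      Set.prod_mono subset_rfl Set.Ioc_subset_Icc_self
    have hcpt : IsCompact (Metric.closedBall x 1 ×ˢ Set.Icc (0:ℝ) 1) :=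
      (isCompact_closedBall _ _).prod isCompact_Icc
    exact lt_of_le_of_lt (measure_mono hsub) hcpt.measure_lt_top
  refine ⟨μ, hμfin, ?_⟩
  haveI : SigmaFinite μ := by
    haveI := hμfin
    infer_instance
  exact (Measure.prod_eq fun s t hs ht => hrect s hs t ht).symm
end

section
/- Let n ≥ 1 and let μ̄ be a locally finite Borel measure on ℝⁿ × ℝ that is invariant under all translations in the last coordinate, i.e., the pushforward of μ̄ under the map (x,z) ↦ (x, z+τ) equals μ̄ for every τ ∈ ℝ. Let ρ₁, ρ₂ : ℝ → ℝ be continuous compactly supported functions with ∫_ℝ ρ₁(z) dz = ∫_ℝ ρ₂(z) dz, and let φ : ℝⁿ → ℝ be continuous and compactly supported. Then ∫_{ℝⁿ×ℝ} ρ₁(z) φ(x) dμ̄(x,z) = ∫_{ℝⁿ×ℝ} ρ₂(z) φ(x) dμ̄(x,z). -/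
open MeasureTheory Filter Topology Pointwise
open scoped ENNReal NNReal

lemma slice_key (n : ℕ)
    (μbar : Measure (EuclideanSpace ℝ (Fin n) × ℝ))
    (hrad : IsLocallyFiniteMeasure μbar)
    (hinv : ∀ τ : ℝ,
      Measure.map (fun p : EuclideanSpace ℝ (Fin n) × ℝ => (p.1, p.2 + τ)) μbar = μbar)
    (ρ σ : ℝ → ℝ)
    (hρ : Continuous ρ) (hρc : HasCompactSupport ρ)
    (hσ : Continuous σ) (hσc : HasCompactSupport σ)
    (φ : EuclideanSpace ℝ (Fin n) → ℝ)
    (hφ : Continuous φ) (hφc : HasCompactSupport φ) :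
    (∫ p : EuclideanSpace ℝ (Fin n) × ℝ, ρ p.2 * φ p.1 ∂ μbar) * (∫ t, σ t) =
      ∫ p : EuclideanSpace ℝ (Fin n) × ℝ,
        (∫ t, σ t * ρ (p.2 - t)) * φ p.1 ∂ μbar := by
  haveI := hrad
  -- translation invariance in integral form
  have hA : ∀ t : ℝ, (∫ p : EuclideanSpace ℝ (Fin n) × ℝ, ρ (p.2 - t) * φ p.1 ∂ μbar)
      = ∫ p : EuclideanSpace ℝ (Fin n) × ℝ, ρ p.2 * φ p.1 ∂ μbar := by
    intro t
    have hmeas : Measurable (fun p : EuclideanSpace ℝ (Fin n) × ℝ => (p.1, p.2 + t)) :=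
      (measurable_fst.prodMk (measurable_snd.add_const t))
    have hg : Continuous (fun p : EuclideanSpace ℝ (Fin n) × ℝ => ρ (p.2 - t) * φ p.1) :=
      (hρ.comp (continuous_snd.sub continuous_const)).mul (hφ.comp continuous_fst)
    conv_lhs => rw [← hinv t]
    rw [integral_map hmeas.aemeasurable hg.aestronglyMeasurable]
    simp
  -- the integrand on the product space
  set F : (EuclideanSpace ℝ (Fin n) × ℝ) → ℝ → ℝ :=
    fun p t => σ t * ρ (p.2 - t) * φ p.1 with hF
  have hFc : Continuous (Function.uncurry F) := by
    apply Continuous.mul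
    · exact ((hσ.comp continuous_snd).mul
        (hρ.comp ((continuous_snd.comp continuous_fst).sub continuous_snd)))
    · exact hφ.comp (continuous_fst.comp continuous_fst)
  have hFsupp : HasCompactSupport (Function.uncurry F) := by
    apply HasCompactSupport.intro
      (K := (tsupport φ ×ˢ (tsupport σ + tsupport ρ)) ×ˢ tsupport σ)
      (IsCompact.prod (IsCompact.prod hφc (IsCompact.add hσc hρc)) hσc)
    intro x hx
    by_contra h
    apply hx
    have h1 : σ x.2 ≠ 0 := fun h0 => h (by simp [Function.uncurry, hF, h0])
    have h2 : ρ (x.1.2 - x.2) ≠ 0 := fun h0 => h (by simp [Function.uncurry, hF, h0])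
    have h3 : φ x.1.1 ≠ 0 := fun h0 => h (by simp [Function.uncurry, hF, h0])
    refine Set.mk_mem_prod (Set.mk_mem_prod ?_ ?_) ?_
    · exact subset_tsupport φ h3
    · have : x.1.2 = x.2 + (x.1.2 - x.2) := by ring
      rw [this]
      exact Set.add_mem_add (subset_tsupport σ h1) (subset_tsupport ρ h2)
    · exact subset_tsupport σ h1
  have hFint : Integrable (Function.uncurry F) (μbar.prod volume) :=
    hFc.integrable_of_hasCompactSupport hFsupp
  have swap := integral_integral_swap hFint
  -- compute the right side of swap
  have hR : (∫ t, ∫ p : EuclideanSpace ℝ (Fin n) × ℝ, F p t ∂ μbar)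
      = (∫ p : EuclideanSpace ℝ (Fin n) × ℝ, ρ p.2 * φ p.1 ∂ μbar) * (∫ t, σ t) := by
    have : ∀ t : ℝ, (∫ p : EuclideanSpace ℝ (Fin n) × ℝ, F p t ∂ μbar)
        = σ t * (∫ p : EuclideanSpace ℝ (Fin n) × ℝ, ρ p.2 * φ p.1 ∂ μbar) := by
      intro t
      have : (∫ p : EuclideanSpace ℝ (Fin n) × ℝ, F p t ∂ μbar)
          = σ t * (∫ p : EuclideanSpace ℝ (Fin n) × ℝ, ρ (p.2 - t) * φ p.1 ∂ μbar) := by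
        rw [← integral_const_mul]
        simp only [hF, mul_assoc]
      rw [this, hA t]
    rw [integral_congr_ae (Filter.EventuallyEq.of_eq (funext this)),
      integral_mul_const, mul_comm]
  -- compute the left side of swap
  have hL : (∫ p : EuclideanSpace ℝ (Fin n) × ℝ, (∫ t, F p t) ∂ μbar)
      = ∫ p : EuclideanSpace ℝ (Fin n) × ℝ, (∫ t, σ t * ρ (p.2 - t)) * φ p.1 ∂ μbar := by
    apply integral_congr_ae
    apply Filter.EventuallyEq.of_eq
    funext p
    rw [← integral_mul_const]
  rw [← hR, ← swap, hL]

lemma conv_symm (ρ σ : ℝ → ℝ) (z : ℝ) :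
    (∫ t, σ t * ρ (z - t)) = ∫ t, ρ t * σ (z - t) := by
  have := integral_sub_left_eq_self (fun t => σ t * ρ (z - t)) (volume : Measure ℝ) z
  calc (∫ t, σ t * ρ (z - t)) = ∫ t, σ (z - t) * ρ (z - (z - t)) := this.symm
    _ = ∫ t, ρ t * σ (z - t) := by
        congr 1; funext t; rw [mul_comm]; congr 1; ring_nf

/-- Well-definedness of the sliced measure of a z-invariant measure: the value of
`∫ ρ(z) φ(x) dμ̄` depends on `ρ` only through `∫ ρ dz` (Lemma 5.6 (1)). -/
theorem stmt_11 (n : ℕ) (hn : 1 ≤ n)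
    (μbar : Measure (EuclideanSpace ℝ (Fin n) × ℝ))
    (hrad : IsLocallyFiniteMeasure μbar)
    (hinv : ∀ τ : ℝ,
      Measure.map (fun p : EuclideanSpace ℝ (Fin n) × ℝ => (p.1, p.2 + τ)) μbar = μbar)
    (ρ₁ ρ₂ : ℝ → ℝ)
    (hρ₁ : Continuous ρ₁) (hρ₁c : HasCompactSupport ρ₁)
    (hρ₂ : Continuous ρ₂) (hρ₂c : HasCompactSupport ρ₂)
    (hint : (∫ z, ρ₁ z) = ∫ z, ρ₂ z)
    (φ : EuclideanSpace ℝ (Fin n) → ℝ)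
    (hφ : Continuous φ) (hφc : HasCompactSupport φ) :
    (∫ p : EuclideanSpace ℝ (Fin n) × ℝ, ρ₁ p.2 * φ p.1 ∂ μbar) =
      ∫ p : EuclideanSpace ℝ (Fin n) × ℝ, ρ₂ p.2 * φ p.1 ∂ μbar := by
  haveI := hrad
  -- the bump function w
  set w : ℝ → ℝ := fun t => max (1 - |t|) 0 with hw
  have hwcont : Continuous w := (continuous_const.sub continuous_abs).max continuous_const
  have hwsupp : HasCompactSupport w := by
    apply HasCompactSupport.intro (isCompact_Icc (a := (-1 : ℝ)) (b := 1))
    intro t ht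
    have : 1 < |t| := by
      rcases abs_cases t with ⟨h1, h2⟩ | ⟨h1, h2⟩ <;>
        simp only [Set.mem_Icc, not_and_or, not_le] at ht <;> rcases ht with h | h <;> linarith
    simp [hw, max_eq_right, sub_nonpos, le_of_lt this]
  have hwnonneg : ∀ t, 0 ≤ w t := fun t => le_max_right _ _
  have hwint : Integrable w := hwcont.integrable_of_hasCompactSupport hwsupp
  have hwpos : 0 < ∫ t, w t := by
    rw [integral_pos_iff_support_of_nonneg hwnonneg hwint]
    have hsub : Set.Ioo (-1 : ℝ) 1 ⊆ Function.support w := by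
      intro t ht
      have : 0 < 1 - |t| := by
        rcases ht with ⟨h1, h2⟩
        rcases abs_cases t with ⟨h3, h4⟩ | ⟨h3, h4⟩ <;> linarith
      simp only [hw, Function.mem_support]
      positivity
    calc (0 : ℝ≥0∞) < volume (Set.Ioo (-1 : ℝ) 1) := by
          rw [Real.volume_Ioo]; norm_num
      _ ≤ volume (Function.support w) := measure_mono hsub
  -- key lemma both ways
  have key : ∀ ρ : ℝ → ℝ, Continuous ρ → HasCompactSupport ρ →
      (∫ p : EuclideanSpace ℝ (Fin n) × ℝ, ρ p.2 * φ p.1 ∂ μbar) * (∫ t, w t)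
        = (∫ p : EuclideanSpace ℝ (Fin n) × ℝ, w p.2 * φ p.1 ∂ μbar) * (∫ t, ρ t) := by
    intro ρ hρ hρc
    rw [slice_key n μbar hrad hinv ρ w hρ hρc hwcont hwsupp φ hφ hφc,
      slice_key n μbar hrad hinv w ρ hwcont hwsupp hρ hρc φ hφ hφc]
    apply integral_congr_ae
    apply Filter.EventuallyEq.of_eq
    funext p
    rw [conv_symm ρ w p.2]
  have h1 := key ρ₁ hρ₁ hρ₁c
  have h2 := key ρ₂ hρ₂ hρ₂c
  rw [hint, ← h2] at h1
  exact mul_right_cancel₀ (ne_of_gt hwpos) h1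
end
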